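/- Let σ, k, c be real numbers with k ≠ 0, let I ⊆ ℝ be an open set, and let Φ : ℝ → ℝ be differentiable on I with Φ'(ξ) = σ + Φ(ξ)² for all ξ ∈ I. Define u(x,t) = (c² - 8σk⁴ - k²)/(6k²) - 2k²·Φ(ct + kx)². Then u satisfies the fourth-order Boussinesq equation u_{tt} = u_{xx} + 3·(u²)_{xx} + u_{xxxx} at every point (x,t) with ct + kx ∈ I. -/

import Mathlib

/-- If Φ solves the Riccati equation Φ' = σ + Φ² on an open set I and k ≠ 0, then
u(x,t) = (c²-8σk⁴-k²)/(6k²) - 2k²·Φ(ct+kx)² satisfies the fourth-order Boussinesq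
equation u_{tt} = u_{xx} + 3·(u²)_{xx} + u_{xxxx} at every point with ct + kx ∈ I. -/
theorem riccati_solution_of_Boussinesq (σ k c : ℝ) (hk : k ≠ 0)
    (I : Set ℝ) (hI : IsOpen I) (Φ : ℝ → ℝ)
    (hΦ : ∀ ξ ∈ I, HasDerivAt Φ (σ + Φ ξ ^ 2) ξ)
    (u : ℝ → ℝ → ℝ)
    (hu : ∀ x t : ℝ,
      u x t = (c ^ 2 - 8 * σ * k ^ 4 - k ^ 2) / (6 * k ^ 2)
        - 2 * k ^ 2 * Φ (c * t + k * x) ^ 2) :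
    ∀ x t : ℝ, c * t + k * x ∈ I →
      deriv (deriv (fun t' : ℝ => u x t')) t =
        deriv (deriv (fun x' : ℝ => u x' t)) x
          + 3 * deriv (deriv (fun x' : ℝ => (u x' t) ^ 2)) x
          + deriv (deriv (deriv (deriv (fun x' : ℝ => u x' t)))) x := by
  intro x t hmem
  set C : ℝ := (c ^ 2 - 8 * σ * k ^ 4 - k ^ 2) / (6 * k ^ 2) with hC
  -- derivative lemmas on I for polynomial expressions in Φ
  have d1 : ∀ ξ ∈ I, HasDerivAt (fun s => Φ s ^ 2)
      (2 * σ * Φ ξ + 2 * Φ ξ ^ 3) ξ := by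
    intro ξ hξ
    have h := (hΦ ξ hξ).pow 2
    exact h.congr_deriv (by push_cast; ring)
  have d2 : ∀ ξ ∈ I, HasDerivAt (fun s => 2 * σ * Φ s + 2 * Φ s ^ 3)
      (2 * σ ^ 2 + 8 * σ * Φ ξ ^ 2 + 6 * Φ ξ ^ 4) ξ := by
    intro ξ hξ
    have h := ((hΦ ξ hξ).const_mul (2 * σ)).add (((hΦ ξ hξ).pow 3).const_mul 2)
    exact h.congr_deriv (by push_cast; ring)
  have d3 : ∀ ξ ∈ I, HasDerivAt (fun s => 2 * σ ^ 2 + 8 * σ * Φ s ^ 2 + 6 * Φ s ^ 4)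
      (16 * σ ^ 2 * Φ ξ + 40 * σ * Φ ξ ^ 3 + 24 * Φ ξ ^ 5) ξ := by
    intro ξ hξ
    have h := ((((hΦ ξ hξ).pow 2).const_mul (8 * σ)).add
      (((hΦ ξ hξ).pow 4).const_mul 6)).const_add (2 * σ ^ 2)
    exact (h.congr_deriv (by push_cast; ring)).congr_of_eventuallyEq
      (Filter.Eventually.of_forall fun s => by simp only [Pi.add_apply, Pi.pow_apply]; ring)
  have d4 : ∀ ξ ∈ I, HasDerivAt
      (fun s => 16 * σ ^ 2 * Φ s + 40 * σ * Φ s ^ 3 + 24 * Φ s ^ 5)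
      (16 * σ ^ 3 + 136 * σ ^ 2 * Φ ξ ^ 2 + 240 * σ * Φ ξ ^ 4 + 120 * Φ ξ ^ 6) ξ := by
    intro ξ hξ
    have h := (((hΦ ξ hξ).const_mul (16 * σ ^ 2)).add
      (((hΦ ξ hξ).pow 3).const_mul (40 * σ))).add (((hΦ ξ hξ).pow 5).const_mul 24)
    exact h.congr_deriv (by push_cast; ring)
  have dg1 : ∀ ξ ∈ I, HasDerivAt (fun s => Φ s ^ 4)
      (4 * σ * Φ ξ ^ 3 + 4 * Φ ξ ^ 5) ξ := by
    intro ξ hξ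
    have h := (hΦ ξ hξ).pow 4
    exact h.congr_deriv (by push_cast; ring)
  have dg2 : ∀ ξ ∈ I, HasDerivAt (fun s => 4 * σ * Φ s ^ 3 + 4 * Φ s ^ 5)
      (12 * σ ^ 2 * Φ ξ ^ 2 + 32 * σ * Φ ξ ^ 4 + 20 * Φ ξ ^ 6) ξ := by
    intro ξ hξ
    have h := (((hΦ ξ hξ).pow 3).const_mul (4 * σ)).add (((hΦ ξ hξ).pow 5).const_mul 4)
    exact h.congr_deriv (by push_cast; ring)
  -- affine maps
  have hlt : ∀ s : ℝ, HasDerivAt (fun t' : ℝ => c * t' + k * x) c s := by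
    intro s
    simpa using ((hasDerivAt_id s).const_mul c).add_const (k * x)
  have hlx : ∀ s : ℝ, HasDerivAt (fun x' : ℝ => c * t + k * x') k s := by
    intro s
    simpa using (((hasDerivAt_id s).const_mul k).const_add (c * t))
  -- open sets
  have hSt : IsOpen {s : ℝ | c * s + k * x ∈ I} :=
    hI.preimage (by fun_prop : Continuous fun s : ℝ => c * s + k * x)
  have hSx : IsOpen {s : ℝ | c * t + k * s ∈ I} :=
    hI.preimage (by fun_prop : Continuous fun s : ℝ => c * t + k * s)
  have hmt : t ∈ {s : ℝ | c * s + k * x ∈ I} := hmem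
  have hmx : x ∈ {s : ℝ | c * t + k * s ∈ I} := hmem
  -- congruence of deriv on open sets
  have congrD : ∀ (f g : ℝ → ℝ) (S : Set ℝ), IsOpen S → (∀ s ∈ S, f s = g s) →
      ∀ s ∈ S, deriv f s = deriv g s := by
    intro f g S hS h s hs
    exact Filter.EventuallyEq.deriv_eq (Filter.eventuallyEq_of_mem (hS.mem_nhds hs) h)
  -- composition helpers
  have compT : ∀ (f df : ℝ → ℝ), (∀ ξ ∈ I, HasDerivAt f (df ξ) ξ) →
      ∀ s ∈ {s : ℝ | c * s + k * x ∈ I},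
        HasDerivAt (fun t' => f (c * t' + k * x)) (df (c * s + k * x) * c) s := by
    intro f df hf s hs
    exact HasDerivAt.comp s (hf _ hs) (hlt s)
  have compX : ∀ (f df : ℝ → ℝ), (∀ ξ ∈ I, HasDerivAt f (df ξ) ξ) →
      ∀ s ∈ {s : ℝ | c * t + k * s ∈ I},
        HasDerivAt (fun x' => f (c * t + k * x')) (df (c * t + k * s) * k) s := by
    intro f df hf s hs
    exact HasDerivAt.comp s (hf _ hs) (hlx s)
  ----------------------------------------------------------------
  -- t-direction (two derivatives)
  ----------------------------------------------------------------
  have hTfun : (fun t' : ℝ => u x t') =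
      fun t' => C - 2 * k ^ 2 * Φ (c * t' + k * x) ^ 2 := funext fun s => hu x s
  have hT1 : ∀ s ∈ {s : ℝ | c * s + k * x ∈ I},
      deriv (fun t' : ℝ => u x t') s
        = -(2 * k ^ 2 * ((2 * σ * Φ (c * s + k * x) + 2 * Φ (c * s + k * x) ^ 3) * c)) := by
    intro s hs
    rw [hTfun]
    exact (((compT _ _ d1 s hs).const_mul (2 * k ^ 2)).const_sub C).deriv
  have hLHS : deriv (deriv (fun t' : ℝ => u x t')) t
      = -(2 * k ^ 2 * ((2 * σ ^ 2 + 8 * σ * Φ (c * t + k * x) ^ 2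
          + 6 * Φ (c * t + k * x) ^ 4) * c * c)) := by
    rw [congrD _ _ _ hSt hT1 t hmt]
    exact (((compT _ _ d2 t hmt).mul_const c).const_mul (2 * k ^ 2)).neg.deriv
  ----------------------------------------------------------------
  -- x-direction for u (four derivatives)
  ----------------------------------------------------------------
  have hXfun : (fun x' : ℝ => u x' t) =
      fun x' => C - 2 * k ^ 2 * Φ (c * t + k * x') ^ 2 := funext fun s => hu s t
  have hX1 : ∀ s ∈ {s : ℝ | c * t + k * s ∈ I},
      deriv (fun x' : ℝ => u x' t) s
        = -(2 * k ^ 2 * ((2 * σ * Φ (c * t + k * s) + 2 * Φ (c * t + k * s) ^ 3) * k)) := by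
    intro s hs
    rw [hXfun]
    exact (((compX _ _ d1 s hs).const_mul (2 * k ^ 2)).const_sub C).deriv
  have hX2 : ∀ s ∈ {s : ℝ | c * t + k * s ∈ I},
      deriv (deriv (fun x' : ℝ => u x' t)) s
        = -(2 * k ^ 2 * ((2 * σ ^ 2 + 8 * σ * Φ (c * t + k * s) ^ 2
            + 6 * Φ (c * t + k * s) ^ 4) * k * k)) := by
    intro s hs
    rw [congrD _ _ _ hSx hX1 s hs]
    exact (((compX _ _ d2 s hs).mul_const k).const_mul (2 * k ^ 2)).neg.deriv
  have hX3 : ∀ s ∈ {s : ℝ | c * t + k * s ∈ I},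
      deriv (deriv (deriv (fun x' : ℝ => u x' t))) s
        = -(2 * k ^ 2 * ((16 * σ ^ 2 * Φ (c * t + k * s) + 40 * σ * Φ (c * t + k * s) ^ 3
            + 24 * Φ (c * t + k * s) ^ 5) * k * k * k)) := by
    intro s hs
    rw [congrD _ _ _ hSx hX2 s hs]
    exact ((((compX _ _ d3 s hs).mul_const k).mul_const k).const_mul (2 * k ^ 2)).neg.deriv
  have hX4 : deriv (deriv (deriv (deriv (fun x' : ℝ => u x' t)))) x
      = -(2 * k ^ 2 * ((16 * σ ^ 3 + 136 * σ ^ 2 * Φ (c * t + k * x) ^ 2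
          + 240 * σ * Φ (c * t + k * x) ^ 4 + 120 * Φ (c * t + k * x) ^ 6)
            * k * k * k * k)) := by
    rw [congrD _ _ _ hSx hX3 x hmx]
    exact (((((compX _ _ d4 x hmx).mul_const k).mul_const k).mul_const k).const_mul
      (2 * k ^ 2)).neg.deriv
  ----------------------------------------------------------------
  -- x-direction for u² (two derivatives)
  ----------------------------------------------------------------
  have hQfun : (fun x' : ℝ => (u x' t) ^ 2) =
      fun x' => C ^ 2 - 4 * C * k ^ 2 * Φ (c * t + k * x') ^ 2
        + 4 * k ^ 4 * Φ (c * t + k * x') ^ 4 := by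
    funext s; rw [hu]; ring
  have hQ1 : ∀ s ∈ {s : ℝ | c * t + k * s ∈ I},
      deriv (fun x' : ℝ => (u x' t) ^ 2) s
        = -(4 * C * k ^ 2 * ((2 * σ * Φ (c * t + k * s) + 2 * Φ (c * t + k * s) ^ 3) * k))
          + 4 * k ^ 4 * ((4 * σ * Φ (c * t + k * s) ^ 3 + 4 * Φ (c * t + k * s) ^ 5) * k) := by
    intro s hs
    rw [hQfun]
    exact ((((compX _ _ d1 s hs).const_mul (4 * C * k ^ 2)).const_sub (C ^ 2)).add
      ((compX _ _ dg1 s hs).const_mul (4 * k ^ 4))).deriv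
  have hQ2 : deriv (deriv (fun x' : ℝ => (u x' t) ^ 2)) x
      = -(4 * C * k ^ 2 * ((2 * σ ^ 2 + 8 * σ * Φ (c * t + k * x) ^ 2
          + 6 * Φ (c * t + k * x) ^ 4) * k * k))
        + 4 * k ^ 4 * ((12 * σ ^ 2 * Φ (c * t + k * x) ^ 2
          + 32 * σ * Φ (c * t + k * x) ^ 4 + 20 * Φ (c * t + k * x) ^ 6) * k * k) := by
    rw [congrD _ _ _ hSx hQ1 x hmx]
    exact (((((compX _ _ d2 x hmx).mul_const k).const_mul (4 * C * k ^ 2)).neg).add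
      (((compX _ _ dg2 x hmx).mul_const k).const_mul (4 * k ^ 4))).deriv
  ----------------------------------------------------------------
  -- conclude
  ----------------------------------------------------------------
  rw [hLHS, hX2 x hmx, hQ2, hX4, hC]
  field_simp
  ring
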